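/- For all real numbers a > 0 and b > 0, the limit superior, along the cofinite filter on ℕ × ℕ, of the function sending (n, m) to (2·(n+1)·(m+1) + (n+1) + (m+1)) / ((π·a·b/4)·((n+1)²/a² + (m+1)²/b²)) equals 4/π. -/

import Mathlib

open Filter Real

set_option maxHeartbeats 1600000 in
/-- Arithmetic core of the Neumann-domain count for the rectangle `(0,a) × (0,b)`:
the limsup, along the cofinite filter on `ℕ × ℕ`, of the ratio of the Neumann domain
count `2nm + n + m` (for positive integers `n = p.1 + 1`, `m = p.2 + 1`) to the Weyl
asymptotics `(π a b / 4) (n²/a² + m²/b²)` equals `4/π`. -/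
theorem rectangle_neumann_count_limsup (a b : ℝ) (ha : 0 < a) (hb : 0 < b) :
    Filter.limsup
      (fun p : ℕ × ℕ =>
        (2 * ((p.1 : ℝ) + 1) * ((p.2 : ℝ) + 1) + ((p.1 : ℝ) + 1) + ((p.2 : ℝ) + 1)) /
          ((Real.pi * a * b / 4) *
            (((p.1 : ℝ) + 1) ^ 2 / a ^ 2 + ((p.2 : ℝ) + 1) ^ 2 / b ^ 2)))
      Filter.cofinite = 4 / Real.pi := by
  have hπ : (0:ℝ) < Real.pi := Real.pi_pos
  set f : ℕ × ℕ → ℝ := fun p =>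
        (2 * ((p.1 : ℝ) + 1) * ((p.2 : ℝ) + 1) + ((p.1 : ℝ) + 1) + ((p.2 : ℝ) + 1)) /
          ((Real.pi * a * b / 4) *
            (((p.1 : ℝ) + 1) ^ 2 / a ^ 2 + ((p.2 : ℝ) + 1) ^ 2 / b ^ 2)) with hf
  set c : ℝ := Real.pi / 4 * min (b / a) (a / b) with hcdef
  have hc : 0 < c := by positivity
  -- pointwise upper bound
  have hub : ∀ p : ℕ × ℕ, f p ≤ 4 / Real.pi + (2 / c) * ((max p.1 p.2 : ℝ) + 1)⁻¹ := by
    intro p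
    set n : ℝ := (p.1 : ℝ) + 1 with hn
    set m : ℝ := (p.2 : ℝ) + 1 with hm
    have hn0 : (0:ℝ) < n := by positivity
    have hm0 : (0:ℝ) < m := by positivity
    set M : ℝ := max n m with hM
    have hM0 : (0:ℝ) < M := lt_max_of_lt_left hn0
    have hMeq : M = (max p.1 p.2 : ℝ) + 1 := by
      rw [hM, hn, hm, max_add_add_right]
    set D : ℝ := (Real.pi * a * b / 4) * (n ^ 2 / a ^ 2 + m ^ 2 / b ^ 2) with hD
    have hDrw : D = Real.pi / 4 * ((b / a) * n ^ 2 + (a / b) * m ^ 2) := by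
      rw [hD]; field_simp
    have key : 2 * n * m ≤ (b / a) * n ^ 2 + (a / b) * m ^ 2 := by
      have hxpos : (0:ℝ) < b / a := by positivity
      have hid : (b / a) * ((b / a) * n ^ 2 + (a / b) * m ^ 2 - 2 * n * m)
          = ((b / a) * n - m) ^ 2 := by field_simp; ring
      have h0 : 0 ≤ (b / a) * ((b / a) * n ^ 2 + (a / b) * m ^ 2 - 2 * n * m) := by
        rw [hid]; exact sq_nonneg _
      have := (mul_nonneg_iff_of_pos_left hxpos).mp h0
      linarith
    have hD1 : Real.pi * n * m / 2 ≤ D := by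
      rw [hDrw]
      have := mul_le_mul_of_nonneg_left key (le_of_lt (by positivity : (0:ℝ) < Real.pi / 4))
      linarith [this]
    have hD2 : c * M ^ 2 ≤ D := by
      rw [hDrw, hcdef]
      have hmin : (0:ℝ) < min (b / a) (a / b) := by positivity
      have h1 : M ^ 2 ≤ n ^ 2 + m ^ 2 := by
        rcases max_cases n m with ⟨h, _⟩ | ⟨h, _⟩ <;> rw [hM, h] <;> nlinarith
      have h2a := mul_le_mul_of_nonneg_right (min_le_left (b / a) (a / b)) (sq_nonneg n)
      have h2b := mul_le_mul_of_nonneg_right (min_le_right (b / a) (a / b)) (sq_nonneg m)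
      have h3 := mul_le_mul_of_nonneg_left h1 (le_of_lt hmin)
      have h4 : min (b / a) (a / b) * (n ^ 2 + m ^ 2)
          ≤ (b / a) * n ^ 2 + (a / b) * m ^ 2 := by ring_nf; ring_nf at h2a h2b; linarith
      have h5 := h3.trans h4
      have := mul_le_mul_of_nonneg_left h5 (le_of_lt (by positivity : (0:ℝ) < Real.pi / 4))
      linarith [this]
    have hD0 : 0 < D := lt_of_lt_of_le (by positivity) hD1
    have hsplit : f p = (2 * n * m) / D + (n + m) / D := by
      rw [hf]; simp only [← hn, ← hm, ← hD]
      rw [← add_div]; ring_nf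
    rw [hsplit, hMeq.symm]
    clear hsplit hDrw hD hMeq hn hm hf
    clear_value f n m M D c
    have b1 : (2 * n * m) / D ≤ 4 / Real.pi := by
      rw [div_le_div_iff₀ hD0 hπ]
      nlinarith [hD1]
    have b2 : (n + m) / D ≤ (2 / c) * M⁻¹ := by
      have hR : (2 / c) * M⁻¹ = 2 / (c * M) := by
        rw [eq_comm, div_mul_eq_div_div, div_eq_mul_inv (2 / c)]
      rw [hR, div_le_div_iff₀ hD0 (mul_pos hc hM0)]
      have h1 : n ≤ M := hM ▸ le_max_left n m
      have h2 : m ≤ M := hM ▸ le_max_right n m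
      nlinarith [hD2, mul_le_mul_of_nonneg_right (add_le_add h1 h2)
        (le_of_lt (mul_pos hc hM0))]
    linarith
  -- the upper bound function tends to 4/π along cofinite
  have hmax : Tendsto (fun p : ℕ × ℕ => max p.1 p.2) cofinite atTop := by
    rw [Filter.tendsto_atTop]
    intro N
    rw [Filter.eventually_cofinite]
    apply Set.Finite.subset ((Set.finite_Iio N).prod (Set.finite_Iio N))
    intro p hp
    simp only [Set.mem_setOf_eq, not_le] at hp
    exact ⟨lt_of_le_of_lt (le_max_left _ _) hp, lt_of_le_of_lt (le_max_right _ _) hp⟩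
  have hφ : Tendsto (fun p : ℕ × ℕ => 4 / Real.pi + (2 / c) * ((max p.1 p.2 : ℝ) + 1)⁻¹)
      cofinite (nhds (4 / Real.pi)) := by
    have h0 : Tendsto (fun p : ℕ × ℕ => (((max p.1 p.2 : ℕ)) : ℝ)) cofinite atTop :=
      tendsto_natCast_atTop_atTop.comp hmax
    have h1 : Tendsto (fun p : ℕ × ℕ => ((max p.1 p.2 : ℝ) + 1)) cofinite atTop := by
      have := tendsto_atTop_add_const_right _ (1:ℝ) h0
      refine this.congr fun p => ?_
      push_cast [Nat.cast_max]
      ring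
    have h2 : Tendsto (fun p : ℕ × ℕ => ((max p.1 p.2 : ℝ) + 1)⁻¹) cofinite (nhds 0) :=
      tendsto_inv_atTop_zero.comp h1
    have h3 := (tendsto_const_nhds (x := (4 / Real.pi : ℝ)) (f := (cofinite : Filter (ℕ × ℕ)))).add
      ((tendsto_const_nhds (x := (2 / c : ℝ))).mul h2)
    simpa using h3
  have hfnonneg : ∀ p : ℕ × ℕ, 0 ≤ f p := by
    intro p; rw [hf]; positivity
  have hbound : IsBoundedUnder (· ≤ ·) (cofinite : Filter (ℕ × ℕ)) f :=
    (hφ.isBoundedUnder_le).mono_le (Eventually.of_forall hub)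
  have hcobdd : IsCoboundedUnder (· ≤ ·) (cofinite : Filter (ℕ × ℕ)) f :=
    IsBoundedUnder.isCoboundedUnder_le (Filter.isBoundedUnder_of ⟨0, fun p => hfnonneg p⟩)
  have upper : Filter.limsup f cofinite ≤ 4 / Real.pi := by
    calc Filter.limsup f cofinite ≤
        Filter.limsup (fun p : ℕ × ℕ => 4 / Real.pi + (2 / c) * ((max p.1 p.2 : ℝ) + 1)⁻¹) cofinite :=
          Filter.limsup_le_limsup (Eventually.of_forall hub) hcobdd hφ.isBoundedUnder_le
      _ = 4 / Real.pi := hφ.limsup_eq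
  -- lower bound via a diagonal sequence
  set seq : ℕ → ℕ × ℕ := fun k => (⌈(k : ℝ) * a⌉₊, ⌈(k : ℝ) * b⌉₊) with hseqdef
  have hfst : Tendsto (fun k => (seq k).1) atTop atTop := by
    rw [Filter.tendsto_atTop]
    intro N
    filter_upwards [Filter.eventually_ge_atTop (⌈(N : ℝ) / a⌉₊ + 1)] with k hk
    have hk1 : (N : ℝ) / a ≤ (k : ℝ) := by
      calc (N : ℝ) / a ≤ (⌈(N : ℝ) / a⌉₊ : ℝ) := Nat.le_ceil _
        _ ≤ (k : ℝ) := by exact_mod_cast le_trans (Nat.le_succ _) hk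
    have : (N : ℝ) ≤ (k : ℝ) * a := by
      rw [div_le_iff₀ ha] at hk1; linarith
    have := this.trans (Nat.le_ceil _)
    exact_mod_cast this
  have hseq : Tendsto seq atTop (cofinite : Filter (ℕ × ℕ)) := by
    intro S hS
    rw [Filter.mem_map]
    simp only [Filter.mem_cofinite] at hS
    have hfin : ((Prod.fst '' Sᶜ)).Finite := hS.image _
    rcases hfin.bddAbove with ⟨N, hN⟩
    have : ∀ᶠ k in atTop, N < (seq k).1 := hfst.eventually_gt_atTop N
    filter_upwards [this] with k hk
    by_contra hmem
    exact absurd (hN ⟨seq k, hmem, rfl⟩) (not_le.mpr hk)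
  -- limits of normalized coordinates
  have hu : Tendsto (fun k : ℕ => ((⌈(k : ℝ) * a⌉₊ : ℝ) + 1) / k) atTop (nhds a) := by
    apply tendsto_of_tendsto_of_tendsto_of_le_of_le' (tendsto_const_nhds)
      (by simpa using (tendsto_const_nhds (x := a)).add (tendsto_const_div_atTop_nhds_zero_nat 2))
    · filter_upwards [Filter.eventually_ge_atTop 1] with k hk
      have hk0 : (0:ℝ) < (k:ℝ) := by exact_mod_cast hk
      rw [le_div_iff₀ hk0]
      have := Nat.le_ceil ((k:ℝ) * a)
      nlinarith
    · filter_upwards [Filter.eventually_ge_atTop 1] with k hk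
      have hk0 : (0:ℝ) < (k:ℝ) := by exact_mod_cast hk
      rw [div_le_iff₀ hk0]
      have h2 : (2 / (k:ℝ)) * (k:ℝ) = 2 := by field_simp
      have := Nat.ceil_lt_add_one (by positivity : (0:ℝ) ≤ (k:ℝ) * a)
      nlinarith [this, h2]
  have hv : Tendsto (fun k : ℕ => ((⌈(k : ℝ) * b⌉₊ : ℝ) + 1) / k) atTop (nhds b) := by
    apply tendsto_of_tendsto_of_tendsto_of_le_of_le' (tendsto_const_nhds)
      (by simpa using (tendsto_const_nhds (x := b)).add (tendsto_const_div_atTop_nhds_zero_nat 2))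
    · filter_upwards [Filter.eventually_ge_atTop 1] with k hk
      have hk0 : (0:ℝ) < (k:ℝ) := by exact_mod_cast hk
      rw [le_div_iff₀ hk0]
      have := Nat.le_ceil ((k:ℝ) * b)
      nlinarith
    · filter_upwards [Filter.eventually_ge_atTop 1] with k hk
      have hk0 : (0:ℝ) < (k:ℝ) := by exact_mod_cast hk
      rw [div_le_iff₀ hk0]
      have h2 : (2 / (k:ℝ)) * (k:ℝ) = 2 := by field_simp
      have := Nat.ceil_lt_add_one (by positivity : (0:ℝ) ≤ (k:ℝ) * b)
      nlinarith [this, h2]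
  set u : ℕ → ℝ := fun k => ((⌈(k : ℝ) * a⌉₊ : ℝ) + 1) / k with hudef
  set v : ℕ → ℝ := fun k => ((⌈(k : ℝ) * b⌉₊ : ℝ) + 1) / k with hvdef
  have hcongr : ∀ᶠ k in atTop, f (seq k) =
      (2 * u k * v k + u k / k + v k / k) /
        ((Real.pi * a * b / 4) * ((u k) ^ 2 / a ^ 2 + (v k) ^ 2 / b ^ 2)) := by
    filter_upwards [Filter.eventually_ge_atTop 1] with k hk
    have hk0 : ((k:ℝ)) ≠ 0 := by positivity
    rw [hf, hudef, hvdef, hseqdef]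
    simp only
    rw [div_eq_div_iff]
    · field_simp
    · have hn0 : (0:ℝ) < (⌈(k : ℝ) * a⌉₊ : ℝ) + 1 := by positivity
      have hm0 : (0:ℝ) < (⌈(k : ℝ) * b⌉₊ : ℝ) + 1 := by positivity
      positivity
    · have hn0 : (0:ℝ) < ((⌈(k : ℝ) * a⌉₊ : ℝ) + 1) / k := by positivity
      have hm0 : (0:ℝ) < ((⌈(k : ℝ) * b⌉₊ : ℝ) + 1) / k := by positivity
      positivity
  have hlim : Tendsto (f ∘ seq) atTop
      (nhds (4 / Real.pi)) := by
    have hnum : Tendsto (fun k => 2 * u k * v k + u k / k + v k / k) atTop (nhds (2 * a * b)) := by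
      have h1 : Tendsto (fun k => 2 * u k * v k) atTop (nhds (2 * a * b)) := by
        simpa [mul_assoc] using ((tendsto_const_nhds (x := (2:ℝ))).mul hu).mul hv
      have h2 : Tendsto (fun k : ℕ => u k / k) atTop (nhds 0) :=
        hu.div_atTop tendsto_natCast_atTop_atTop
      have h3 : Tendsto (fun k : ℕ => v k / k) atTop (nhds 0) :=
        hv.div_atTop tendsto_natCast_atTop_atTop
      simpa using (h1.add h2).add h3
    have hden : Tendsto (fun k => (Real.pi * a * b / 4) * ((u k) ^ 2 / a ^ 2 + (v k) ^ 2 / b ^ 2))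
        atTop (nhds ((Real.pi * a * b / 4) * (a ^ 2 / a ^ 2 + b ^ 2 / b ^ 2))) := by
      exact tendsto_const_nhds.mul (((hu.pow 2).div_const _).add ((hv.pow 2).div_const _))
    have hden0 : (Real.pi * a * b / 4) * (a ^ 2 / a ^ 2 + b ^ 2 / b ^ 2) ≠ 0 := by
      have : a ^ 2 / a ^ 2 + b ^ 2 / b ^ 2 = 2 := by
        field_simp
        norm_num
      rw [this]; positivity
    have := hnum.div hden hden0
    have heq : 2 * a * b / ((Real.pi * a * b / 4) * (a ^ 2 / a ^ 2 + b ^ 2 / b ^ 2)) = 4 / Real.pi := by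
      field_simp
      ring
    rw [heq] at this
    exact this.congr' (by filter_upwards [hcongr] with k hk; exact hk.symm)
  have lower : 4 / Real.pi ≤ Filter.limsup f cofinite := by
    have h1 : Filter.limsup f (Filter.map seq atTop) = 4 / Real.pi := by
      haveI : (Filter.map seq atTop).NeBot := Filter.map_neBot
      exact Tendsto.limsup_eq (Filter.tendsto_map'_iff.mpr hlim)
    have hcob2 : IsCoboundedUnder (· ≤ ·) (Filter.map seq atTop) f := by
      haveI : (Filter.map seq atTop).NeBot := Filter.map_neBot
      exact IsBoundedUnder.isCoboundedUnder_le (Filter.isBoundedUnder_of ⟨0, fun p => hfnonneg p⟩)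
    have h2 : Filter.limsup f (Filter.map seq atTop) ≤ Filter.limsup f cofinite :=
      Filter.limsup_le_limsup_of_le hseq hcob2 hbound
    linarith [h1 ▸ h2]
  exact le_antisymm upper lower
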